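/- Suppose the treatment effect τ is in L²_P(X,T). The set of minimizers in L²_P(X,T) of the population loss L_c(h) = E[Y - m(X) - h(X,T) + E{h(X,T)|X}]², where m(X) = E(Y|X), is exactly S = {h : h(X,T) = τ(X,T) + s(X) almost surely, for some s ∈ L²_P(X)}, where τ(x,t) = E(Y | X=x, T=t) - E(Y | X=x, T=0). -/

import Mathlib

open MeasureTheory

private lemma integrable_mul_of_memL2 {Ω : Type*} {m0 : MeasurableSpace Ω} {μ : Measure Ω}
    {f g : Ω → ℝ} (hf : MemLp f 2 μ) (hg : MemLp g 2 μ) :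
    Integrable (fun ω => f ω * g ω) μ := by
  have h := (((hf.add hg).integrable_sq).sub
    ((hf.integrable_sq).add (hg.integrable_sq))).const_mul (1/2 : ℝ)
  refine h.congr (Filter.Eventually.of_forall fun ω => ?_)
  simp only [Pi.sub_apply, Pi.add_apply]
  ring

private lemma memL2_condexp {Ω : Type*} {m m0 : MeasurableSpace Ω} (hm : m ≤ m0)
    {μ : Measure Ω} [IsFiniteMeasure μ] {f : Ω → ℝ} (hf : MemLp f 2 μ) :
    MemLp (μ[f|m]) 2 μ := by
  have hfi : Integrable f μ := hf.integrable one_le_two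
  have h : (↑↑(condExpL2 ℝ ℝ hm (hf.toLp f)) : Ω → ℝ) =ᵐ[μ] μ[f|m] := by
    refine ae_eq_condExp_of_forall_setIntegral_eq hm hfi ?_ ?_ ?_
    · intro s _ _
      exact ((Lp.memLp _).integrable one_le_two).integrableOn
    · intro s hs hμs
      rw [integral_condExpL2_eq hm (hf.toLp f) hs hμs.ne]
      exact setIntegral_congr_ae (hm s hs) ((hf.coeFn_toLp).mono fun x hx _ => hx)
    · exact lpMeas.aestronglyMeasurable _
  exact (Lp.memLp _).ae_eq h

/-- **Solution set of the generalized (continuous-treatment) R-loss.**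
With `mX = σ(X) ≤ mXT = σ(X,T)`, `m(X) = E(Y|X)`, and a treatment effect
`τ ∈ L²_P(X,T)` satisfying (via unconfoundedness and consistency)
`τ − E(τ|X) = E(Y|X,T) − E(Y|X)` a.s., a square-integrable function `h` of `(X,T)`
minimizes `L_c(h) = E[Y − m(X) − h(X,T) + E{h(X,T)|X}]²` over `L²_P(X,T)` if and only
if `h = τ + s` a.s. for some `s ∈ L²_P(X)`. -/
theorem generalized_rloss_solution_set
    {Ω : Type*} {m0 : MeasurableSpace Ω} (μ : Measure Ω) [IsProbabilityMeasure μ]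
    (mX mXT : MeasurableSpace Ω) (hXle : mX ≤ mXT) (hXTle : mXT ≤ m0)
    (Y : Ω → ℝ) (hY : MemLp Y 2 μ)
    (τ : Ω → ℝ) (hτmeas : StronglyMeasurable[mXT] τ) (hτL2 : MemLp τ 2 μ)
    (hτ : (fun ω => τ ω - (μ[τ|mX]) ω) =ᵐ[μ] fun ω => (μ[Y|mXT]) ω - (μ[Y|mX]) ω)
    (Lc : (Ω → ℝ) → ℝ)
    (hLc : ∀ h : Ω → ℝ,
      Lc h = ∫ ω, (Y ω - (μ[Y|mX]) ω - h ω + (μ[h|mX]) ω) ^ 2 ∂μ) :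
    ∀ h : Ω → ℝ, StronglyMeasurable[mXT] h → MemLp h 2 μ →
      ((∀ g : Ω → ℝ, StronglyMeasurable[mXT] g → MemLp g 2 μ → Lc h ≤ Lc g)
        ↔ ∃ s : Ω → ℝ, StronglyMeasurable[mX] s ∧ MemLp s 2 μ ∧
            h =ᵐ[μ] fun ω => τ ω + s ω) := by
  intro h hhm hhL2
  have hX0 : mX ≤ m0 := hXle.trans hXTle
  set M : Ω → ℝ := μ[Y|mX] with hMdef
  set N : Ω → ℝ := μ[Y|mXT] with hNdef
  have hML2 : MemLp M 2 μ := memL2_condexp hX0 hY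
  have hNL2 : MemLp N 2 μ := memL2_condexp hXTle hY
  have hUL2 : MemLp (fun ω => Y ω - N ω) 2 μ := hY.sub hNL2
  have hUint : Integrable (fun ω => Y ω - N ω) μ := hUL2.integrable one_le_two
  -- conditional expectation of the residual `Y - N` given `mXT` is zero
  have hcondU : μ[fun ω => Y ω - N ω|mXT] =ᵐ[μ] 0 := by
    have h1 : μ[Y - N|mXT] =ᵐ[μ] μ[Y|mXT] - μ[N|mXT] :=
      condExp_sub (hY.integrable one_le_two) integrable_condExp mXT
    have h2 : μ[N|mXT] = N :=
      condExp_of_stronglyMeasurable hXTle stronglyMeasurable_condExp integrable_condExp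
    filter_upwards [h1] with ω hω
    have : (μ[Y - N|mXT]) ω = (μ[Y|mXT]) ω - (μ[N|mXT]) ω := hω
    rw [h2, sub_self] at this
    exact this
  -- key decomposition of the loss
  have key : ∀ g : Ω → ℝ, StronglyMeasurable[mXT] g → MemLp g 2 μ →
      Lc g = (∫ ω, (Y ω - N ω) ^ 2 ∂μ)
        + ∫ ω, (N ω - M ω - g ω + (μ[g|mX]) ω) ^ 2 ∂μ := by
    intro g hgm hgL2
    have hgX : MemLp (μ[g|mX]) 2 μ := memL2_condexp hX0 hgL2
    set D : Ω → ℝ := fun ω => N ω - M ω - g ω + (μ[g|mX]) ω with hDdef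
    have hD2 : MemLp D 2 μ := ((hNL2.sub hML2).sub hgL2).add hgX
    have hDm : StronglyMeasurable[mXT] D :=
      ((stronglyMeasurable_condExp.sub (stronglyMeasurable_condExp.mono hXle)).sub hgm).add
        (stronglyMeasurable_condExp.mono hXle)
    have hDint : Integrable D μ := hD2.integrable one_le_two
    have hUD : Integrable (fun ω => (Y ω - N ω) * D ω) μ :=
      integrable_mul_of_memL2 hUL2 hD2
    have hDU : Integrable (fun ω => D ω * (Y ω - N ω)) μ :=
      hUD.congr (Filter.Eventually.of_forall fun ω => by ring)
    -- cross term vanishes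
    have hcross : ∫ ω, (Y ω - N ω) * D ω ∂μ = 0 := by
      have e1 : ∫ ω, (Y ω - N ω) * D ω ∂μ = ∫ ω, D ω * (Y ω - N ω) ∂μ :=
        integral_congr_ae (Filter.Eventually.of_forall fun ω => by ring)
      have e2 : ∫ ω, D ω * (Y ω - N ω) ∂μ
          = ∫ ω, (μ[fun ω => D ω * (Y ω - N ω)|mXT]) ω ∂μ :=
        (integral_condExp hXTle).symm
      have e3 : μ[fun ω => D ω * (Y ω - N ω)|mXT]
          =ᵐ[μ] fun ω => D ω * (μ[fun ω => Y ω - N ω|mXT]) ω := by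
        have := condExp_mul_of_stronglyMeasurable_left (μ := μ) hDm
          (by exact hDU) (by exact hUint)
        exact this
      have e4 : (fun ω => D ω * (μ[fun ω => Y ω - N ω|mXT]) ω) =ᵐ[μ] 0 := by
        filter_upwards [hcondU] with ω hω
        simp [hω]
      rw [e1, e2, integral_congr_ae (e3.trans e4)]
      simp
    have expand : ∀ ω, (Y ω - M ω - g ω + (μ[g|mX]) ω) ^ 2
        = (Y ω - N ω) ^ 2 + (2 * ((Y ω - N ω) * D ω) + D ω ^ 2) := fun ω => by
      simp only [hDdef]; ring
    calc Lc g = ∫ ω, ((Y ω - N ω) ^ 2 + (2 * ((Y ω - N ω) * D ω) + D ω ^ 2)) ∂μ := by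
          rw [hLc g]
          exact integral_congr_ae (Filter.Eventually.of_forall expand)
      _ = (∫ ω, (Y ω - N ω) ^ 2 ∂μ)
            + ∫ ω, (2 * ((Y ω - N ω) * D ω) + D ω ^ 2) ∂μ :=
          integral_add hUL2.integrable_sq ((hUD.const_mul 2).add hD2.integrable_sq)
      _ = (∫ ω, (Y ω - N ω) ^ 2 ∂μ) + ∫ ω, D ω ^ 2 ∂μ := by
          rw [integral_add (hUD.const_mul 2) hD2.integrable_sq, integral_const_mul, hcross]
          ring
  -- the value at τ : D τ = 0 a.e.
  have hDτ : (fun ω => N ω - M ω - τ ω + (μ[τ|mX]) ω) =ᵐ[μ] 0 := by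
    filter_upwards [hτ] with ω hω
    have : τ ω - (μ[τ|mX]) ω = N ω - M ω := hω
    simp only [Pi.zero_apply]
    linarith
  have hLcτ : Lc τ = ∫ ω, (Y ω - N ω) ^ 2 ∂μ := by
    rw [key τ hτmeas hτL2]
    have : ∫ ω, (N ω - M ω - τ ω + (μ[τ|mX]) ω) ^ 2 ∂μ = 0 := by
      rw [integral_congr_ae (g := fun _ => (0:ℝ))
        (hDτ.mono fun ω hω => by simp only [Pi.zero_apply] at hω; simp [hω])]
      simp
    rw [this, add_zero]
  constructor
  · -- minimizer ⇒ h = τ + s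
    intro hmin
    have hgX : MemLp (μ[h|mX]) 2 μ := memL2_condexp hX0 hhL2
    have hDh2 : MemLp (fun ω => N ω - M ω - h ω + (μ[h|mX]) ω) 2 μ :=
      ((hNL2.sub hML2).sub hhL2).add hgX
    have hle : Lc h ≤ Lc τ := hmin τ hτmeas hτL2
    rw [key h hhm hhL2, hLcτ] at hle
    have hint0 : ∫ ω, (N ω - M ω - h ω + (μ[h|mX]) ω) ^ 2 ∂μ = 0 := by
      have h1 : ∫ ω, (N ω - M ω - h ω + (μ[h|mX]) ω) ^ 2 ∂μ ≤ 0 := by linarith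
      have h2 : 0 ≤ ∫ ω, (N ω - M ω - h ω + (μ[h|mX]) ω) ^ 2 ∂μ :=
        integral_nonneg fun ω => sq_nonneg _
      linarith
    have hae : (fun ω => (N ω - M ω - h ω + (μ[h|mX]) ω) ^ 2) =ᵐ[μ] 0 :=
      (integral_eq_zero_iff_of_nonneg (fun ω => sq_nonneg _) hDh2.integrable_sq).mp hint0
    refine ⟨fun ω => (μ[h|mX]) ω - (μ[τ|mX]) ω,
      stronglyMeasurable_condExp.sub stronglyMeasurable_condExp,
      hgX.sub (memL2_condexp hX0 hτL2), ?_⟩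
    filter_upwards [hae, hτ] with ω h1 h2
    have h1' : (N ω - M ω - h ω + (μ[h|mX]) ω) ^ 2 = 0 := h1
    have h1'' : N ω - M ω - h ω + (μ[h|mX]) ω = 0 := by
      exact pow_eq_zero_iff (n := 2) (by norm_num) |>.mp h1'
    have h2' : τ ω - (μ[τ|mX]) ω = N ω - M ω := h2
    linarith
  · -- h = τ + s ⇒ minimizer
    rintro ⟨s, hsm, hsL2, hhs⟩ g hgm hgL2
    have hsint : Integrable s μ := hsL2.integrable one_le_two
    have hτint : Integrable τ μ := hτL2.integrable one_le_two
    have hhs' : h =ᵐ[μ] τ + s := hhs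
    have hcX : μ[h|mX] =ᵐ[μ] fun ω => (μ[τ|mX]) ω + s ω := by
      have h1 : μ[h|mX] =ᵐ[μ] μ[τ + s|mX] := condExp_congr_ae hhs'
      have h2 : μ[τ + s|mX] =ᵐ[μ] μ[τ|mX] + μ[s|mX] := condExp_add hτint hsint mX
      have h3 : μ[s|mX] = s := condExp_of_stronglyMeasurable hX0 hsm hsint
      filter_upwards [h1, h2] with ω hω1 hω2
      rw [hω1, hω2, h3]
      rfl
    have hDh0 : (fun ω => N ω - M ω - h ω + (μ[h|mX]) ω) =ᵐ[μ] 0 := by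
      filter_upwards [hhs, hcX, hτ] with ω h1 h2 h3
      have h3' : τ ω - (μ[τ|mX]) ω = N ω - M ω := h3
      simp only [Pi.zero_apply]
      rw [h1, h2]
      linarith
    have hLch : Lc h = ∫ ω, (Y ω - N ω) ^ 2 ∂μ := by
      rw [key h hhm hhL2]
      have : ∫ ω, (N ω - M ω - h ω + (μ[h|mX]) ω) ^ 2 ∂μ = 0 := by
        rw [integral_congr_ae (g := fun _ => (0:ℝ))
          (hDh0.mono fun ω hω => by simp only [Pi.zero_apply] at hω; simp [hω])]
        simp
      rw [this, add_zero]
    rw [hLch, key g hgm hgL2]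
    have : 0 ≤ ∫ ω, (N ω - M ω - g ω + (μ[g|mX]) ω) ^ 2 ∂μ :=
      integral_nonneg fun ω => sq_nonneg _
    linarith
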